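/- Let (X, D, K) be a b-metric-like space and let {yₙ} be a sequence in X such that D(yₙ, y_{n+1}) ≤ λ·D(y_{n-1}, yₙ) for some λ with 0 < λ < 1/K and every n ∈ ℕ. Then lim_{n,m→∞} D(yₘ, yₙ) = 0 (i.e., for every ε > 0 there exists N such that D(yₘ,yₙ) < ε for all m,n ≥ N). -/

import Mathlib

theorem stmt_2 {X : Type*} (D : X → X → ℝ) (K : ℝ) (hK : 1 ≤ K)
    (hnonneg : ∀ x y, 0 ≤ D x y)
    (hD1 : ∀ x y, D x y = 0 → x = y)
    (hD2 : ∀ x y, D x y = D y x)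
    (hD3 : ∀ x y z, D x z ≤ K * (D x y + D y z))
    (y : ℕ → X) (lam : ℝ) (hlam0 : 0 < lam) (hlamK : lam < 1 / K)
    (hcontr : ∀ n : ℕ, D (y (n + 1)) (y (n + 2)) ≤ lam * D (y n) (y (n + 1))) :
    ∀ ε > (0 : ℝ), ∃ N : ℕ, ∀ m ≥ N, ∀ n ≥ N, D (y m) (y n) < ε := by
  have hKpos : (0 : ℝ) < K := lt_of_lt_of_le one_pos hK
  have hKlam : K * lam < 1 := by
    have := (lt_div_iff₀ hKpos).mp hlamK
    linarith
  have hKlam0 : 0 < K * lam := mul_pos hKpos hlam0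
  have h1 : 0 < 1 - K * lam := by linarith
  set d0 := D (y 0) (y 1) with hd0
  have hd0nn : 0 ≤ d0 := hnonneg _ _
  -- step lemma
  have hstep : ∀ n : ℕ, D (y n) (y (n + 1)) ≤ lam ^ n * d0 := by
    intro n
    induction n with
    | zero => simp [hd0]
    | succ k ih =>
      calc D (y (k + 1)) (y (k + 1 + 1)) ≤ lam * D (y k) (y (k + 1)) := hcontr k
        _ ≤ lam * (lam ^ k * d0) := by
            exact mul_le_mul_of_nonneg_left ih hlam0.le
        _ = lam ^ (k + 1) * d0 := by ring
  set C := 2 * K * d0 / (1 - K * lam) with hC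
  have hCge : 2 * K * d0 ≤ C := by
    rw [hC, le_div_iff₀ h1]
    nlinarith [mul_nonneg (mul_nonneg hd0nn hKpos.le) hKlam0.le]
  have hCnn : 0 ≤ C := by positivity
  have key : ∀ k m : ℕ, D (y m) (y (m + k)) ≤ lam ^ m * C := by
    intro k
    induction k with
    | zero =>
      intro m
      have h := hD3 (y m) (y (m + 1)) (y m)
      rw [hD2 (y (m+1)) (y m)] at h
      have := hstep m
      calc D (y m) (y (m + 0)) = D (y m) (y m) := by norm_num
        _ ≤ K * (D (y m) (y (m+1)) + D (y m) (y (m+1))) := h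
        _ ≤ K * (lam ^ m * d0 + lam ^ m * d0) := by nlinarith
        _ = lam ^ m * (2 * K * d0) := by ring
        _ ≤ lam ^ m * C := by
            exact mul_le_mul_of_nonneg_left hCge (by positivity)
    | succ k ih =>
      intro m
      have h := hD3 (y m) (y (m + 1)) (y (m + (k + 1)))
      have h2 : D (y (m + 1)) (y (m + 1 + k)) ≤ lam ^ (m + 1) * C := ih (m + 1)
      have heq : m + (k + 1) = m + 1 + k := by ring
      rw [heq]
      have hs := hstep m
      calc D (y m) (y (m + 1 + k))
          ≤ K * (D (y m) (y (m + 1)) + D (y (m + 1)) (y (m + 1 + k))) := by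
            rw [heq] at h; exact h
        _ ≤ K * (lam ^ m * d0 + lam ^ (m + 1) * C) := by nlinarith
        _ ≤ lam ^ m * C := by
            have hlm : (0:ℝ) < lam ^ m := pow_pos hlam0 m
            have hCval : C * (1 - K * lam) = 2 * K * d0 := by
              rw [hC]; field_simp
            have : K * d0 + K * lam * C ≤ C := by
              nlinarith [mul_nonneg hKpos.le hd0nn]
            calc K * (lam ^ m * d0 + lam ^ (m + 1) * C)
                = lam ^ m * (K * d0 + K * lam * C) := by ring
              _ ≤ lam ^ m * C := mul_le_mul_of_nonneg_left this hlm.le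
  -- conclude
  intro ε hε
  have hlam1 : lam < 1 := by
    calc lam < 1 / K := hlamK
      _ ≤ 1 := by rw [div_le_one hKpos]; exact hK
  have htend : Filter.Tendsto (fun n : ℕ => lam ^ n * C) Filter.atTop (nhds 0) := by
    have := tendsto_pow_atTop_nhds_zero_of_lt_one hlam0.le hlam1
    simpa using this.mul_const C
  obtain ⟨N, hN⟩ := (Metric.tendsto_atTop.mp htend) ε hε
  refine ⟨N, fun m hm n hn => ?_⟩
  have main : ∀ a b : ℕ, N ≤ a → a ≤ b → D (y a) (y b) < ε := by
    intro a b ha hab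
    obtain ⟨k, rfl⟩ := Nat.exists_eq_add_of_le hab
    have h := key k a
    have hb := hN a ha
    rw [Real.dist_eq, sub_zero, abs_of_nonneg (by positivity)] at hb
    calc D (y a) (y (a + k)) ≤ lam ^ a * C := h
      _ < ε := hb
  rcases le_total m n with h | h
  · exact main m n hm h
  · rw [hD2]; exact main n m hn h
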